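/- Let λ ∈ ℝ, t₀ > 0, and let D : [0,∞) → [0,∞) be differentiable at 0 from the right. Assume (a) D(t) − D(s+t) ≤ e^{−2λt}·(D(0) − D(s)) for all s, t ≥ 0, and (b) D(t₀) ≤ D(0)/2. Then −D'(0) ≥ 2·κ(λ,t₀)·D(0), where κ(λ,t) = 1/(4t) if λ = 0 and κ(λ,t) = λ/(2(1−e^{−2λt})) if λ ≠ 0. -/

import Mathlib

open Filter Finset Real Topology

/-- The analytic core of the main Theorem 3.7 (λ-Fisher monotonicity plus finite cb-return
time implies κ(λ,t_cb)-MLSI): if `D : [0,∞) → [0,∞)` is differentiable at `0` from the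
right, satisfies the difference-form Fisher monotonicity
`D(t) - D(s+t) ≤ e^{-2λt}·(D(0) - D(s))` and the half-decay `D(t₀) ≤ D(0)/2`, then
`-D'(0) ≥ 2·κ(λ,t₀)·D(0)` with `κ(λ,t) = 1/(4t)` for `λ = 0` and
`κ(λ,t) = λ/(2(1-e^{-2λt}))` otherwise. -/
theorem fisher_monotone_and_half_decay_implies_mlsi
    (lam t₀ : ℝ) (ht₀ : 0 < t₀) (D : ℝ → ℝ) (D'0 : ℝ)
    (hnonneg : ∀ t ≥ (0 : ℝ), 0 ≤ D t)
    (hderiv : HasDerivWithinAt D D'0 (Set.Ici 0) 0)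
    (hFM : ∀ s ≥ (0 : ℝ), ∀ t ≥ (0 : ℝ),
        D t - D (s + t) ≤ Real.exp (-2 * lam * t) * (D 0 - D s))
    (hhalf : D t₀ ≤ D 0 / 2) :
    -D'0 ≥ 2 * (if lam = 0 then 1 / (4 * t₀)
        else lam / (2 * (1 - Real.exp (-2 * lam * t₀)))) * D 0 := by
  set h : ℕ → ℝ := fun n => t₀ / (n + 1) with hh_def
  have hhpos : ∀ n, 0 < h n := fun n => div_pos ht₀ (by positivity)
  set S : ℕ → ℝ := fun n => ∑ j ∈ Finset.range (n + 1),
      Real.exp (-2 * lam * (j * h n)) with hS_def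
  have hSpos : ∀ n, 0 < S n := fun n =>
    Finset.sum_pos (fun j _ => Real.exp_pos _) ⟨0, Finset.mem_range.2 (Nat.succ_pos n)⟩
  have hNh : ∀ n : ℕ, ((n : ℝ) + 1) * h n = t₀ := fun n => by
    rw [hh_def]; field_simp
  -- key telescoping inequality
  have key : ∀ n, D 0 / 2 ≤ S n * (D 0 - D (h n)) := by
    intro n
    have tel : ∑ j ∈ Finset.range (n + 1),
        (D (j * h n) - D ((j + 1 : ℕ) * h n)) = D 0 - D (((n : ℝ) + 1) * h n) := by
      rw [Finset.sum_range_sub' (fun j => D ((j : ℝ) * h n)) (n + 1)]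
      push_cast
      norm_num
    have bound : ∑ j ∈ Finset.range (n + 1),
        (D ((j : ℝ) * h n) - D ((j + 1 : ℕ) * h n))
        ≤ S n * (D 0 - D (h n)) := by
      rw [hS_def, Finset.sum_mul]
      refine Finset.sum_le_sum fun j _ => ?_
      have hjh : (0 : ℝ) ≤ (j : ℝ) * h n := by positivity
      have := hFM (h n) (hhpos n).le ((j : ℝ) * h n) hjh
      have hcast : ((j + 1 : ℕ) : ℝ) * h n = h n + (j : ℝ) * h n := by
        push_cast; ring
      rw [hcast]
      exact this
    have hD0 : D 0 / 2 ≤ D 0 - D (((n : ℝ) + 1) * h n) := by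
      rw [hNh n]; linarith
    calc D 0 / 2 ≤ D 0 - D (((n : ℝ) + 1) * h n) := hD0
      _ = _ := tel.symm
      _ ≤ S n * (D 0 - D (h n)) := bound
  -- the slope sequence and the bound sequence
  set u : ℕ → ℝ := fun n => (D (h n) - D 0) / h n with hu_def
  set v : ℕ → ℝ := fun n => -(D 0 / (2 * (h n * S n))) with hv_def
  have hle : ∀ n, u n ≤ v n := by
    intro n
    have hh := hhpos n
    have hS := hSpos n
    have key' : D 0 ≤ 2 * (S n * (D 0 - D (h n))) := by linarith [key n]
    have hmul := mul_le_mul_of_nonneg_left key' hh.le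
    simp only [hu_def, hv_def]
    rw [← neg_div, div_le_div_iff₀ hh (by positivity)]
    nlinarith [hmul]
  -- h n tends to 0
  have h0 : Tendsto h atTop (𝓝 0) := by
    have := tendsto_one_div_add_atTop_nhds_zero_nat.const_mul t₀
    simpa [hh_def, mul_one_div, div_eq_mul_inv] using this
  have h0' : Tendsto h atTop (𝓝[Set.Ici 0 \ {0}] 0) := by
    refine tendsto_nhdsWithin_iff.2 ⟨h0, Eventually.of_forall fun n => ?_⟩
    exact ⟨(hhpos n).le, by simp [(hhpos n).ne']⟩
  have hu : Tendsto u atTop (𝓝 D'0) := by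
    have := (hasDerivWithinAt_iff_tendsto_slope.mp hderiv).comp h0'
    refine this.congr fun n => ?_
    simp [slope_def_field, hu_def, Function.comp]
  rcases eq_or_ne lam 0 with hl | hl
  · -- lam = 0
    have hSval : ∀ n, S n = (n : ℝ) + 1 := by
      intro n
      simp [hS_def, hl]
    have hv' : ∀ n, v n = -(D 0 / (2 * t₀)) := by
      intro n
      simp only [hv_def]
      rw [hSval n, show h n * ((n : ℝ) + 1) = t₀ by rw [mul_comm]; exact hNh n]
    have hvt : Tendsto v atTop (𝓝 (-(D 0 / (2 * t₀)))) := by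
      exact tendsto_const_nhds.congr fun n => (hv' n).symm
    have := le_of_tendsto_of_tendsto' hu hvt hle
    rw [if_pos hl]
    have : 2 * (1 / (4 * t₀)) * D 0 = D 0 / (2 * t₀) := by
      field_simp; ring
    linarith [le_of_tendsto_of_tendsto' hu hvt hle]
  · -- lam ≠ 0
    set E := Real.exp (-2 * lam * t₀) with hE_def
    have hE1 : E ≠ 1 := by
      rw [hE_def, Ne, Real.exp_eq_one_iff]
      intro hc
      rcases mul_eq_zero.mp hc with hc | hc
      · rcases mul_eq_zero.mp hc with hc | hc
        · norm_num at hc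
        · exact hl hc
      · exact ht₀.ne' hc
    have hrne : ∀ n, Real.exp (-2 * lam * h n) ≠ 1 := by
      intro n
      rw [Ne, Real.exp_eq_one_iff]
      intro hc
      rcases mul_eq_zero.mp hc with hc | hc
      · rcases mul_eq_zero.mp hc with hc | hc
        · norm_num at hc
        · exact hl hc
      · exact (hhpos n).ne' hc
    have hSval : ∀ n, S n = (E - 1) / (Real.exp (-2 * lam * h n) - 1) := by
      intro n
      simp only [hS_def]
      have : ∀ j ∈ Finset.range (n + 1),
          Real.exp (-2 * lam * (j * h n)) = Real.exp (-2 * lam * h n) ^ j := by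
        intro j _
        rw [← Real.exp_nat_mul]
        congr 1
        ring
      rw [Finset.sum_congr rfl this, geom_sum_eq (hrne n)]
      congr 1
      rw [← Real.exp_nat_mul, hE_def]
      congr 1
      push_cast
      rw [show ((n : ℝ) + 1) * (-2 * lam * h n) = -2 * lam * (((n : ℝ) + 1) * h n) by ring,
        hNh n]
    -- limit of h n * S n
    have hg : HasDerivAt (fun x : ℝ => Real.exp (-2 * lam * x)) (-2 * lam) 0 := by
      have h1 : HasDerivAt (fun x : ℝ => -2 * lam * x) (-2 * lam) 0 := by
        simpa using (hasDerivAt_id (0 : ℝ)).const_mul (-2 * lam)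
      simpa using h1.exp
    have hslope : Tendsto (slope (fun x : ℝ => Real.exp (-2 * lam * x)) 0)
        (𝓝[≠] 0) (𝓝 (-2 * lam)) := hasDerivAt_iff_tendsto_slope.mp hg
    have h2l : (-2 : ℝ) * lam ≠ 0 := by
      intro hc
      rcases mul_eq_zero.mp hc with hc | hc
      · norm_num at hc
      · exact hl hc
    have hinv : Tendsto (fun x => (slope (fun x : ℝ => Real.exp (-2 * lam * x)) 0 x)⁻¹)
        (𝓝[≠] 0) (𝓝 (-2 * lam)⁻¹) := hslope.inv₀ h2l
    have h0'' : Tendsto h atTop (𝓝[≠] 0) := by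
      refine tendsto_nhdsWithin_iff.2 ⟨h0, Eventually.of_forall fun n => ?_⟩
      simp [(hhpos n).ne']
    have hhs : Tendsto (fun n => h n * S n) atTop (𝓝 ((E - 1) * (-2 * lam)⁻¹)) := by
      have hcomp := (hinv.comp h0'').const_mul (E - 1)
      refine hcomp.congr fun n => ?_
      rw [Function.comp_apply, hSval n]
      rw [slope_def_field]
      simp only [Real.exp_zero, mul_zero, sub_zero]
      rw [inv_div]
      ring
    have hL : (E - 1) * (-2 * lam)⁻¹ ≠ 0 :=
      mul_ne_zero (sub_ne_zero.2 hE1) (inv_ne_zero h2l)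
    have hvt : Tendsto v atTop (𝓝 (-(D 0 / (2 * ((E - 1) * (-2 * lam)⁻¹))))) := by
      have : Tendsto (fun n => 2 * (h n * S n)) atTop
          (𝓝 (2 * ((E - 1) * (-2 * lam)⁻¹))) := hhs.const_mul 2
      exact (tendsto_const_nhds.div this (mul_ne_zero two_ne_zero hL)).neg
    have hfin := le_of_tendsto_of_tendsto' hu hvt hle
    rw [if_neg hl]
    have hne : 1 - E ≠ 0 := sub_ne_zero.2 (Ne.symm hE1)
    have hid : 2 * (lam / (2 * (1 - E))) * D 0
        = D 0 / (2 * ((E - 1) * (-2 * lam)⁻¹)) := by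
      rw [show (2 : ℝ) * ((E - 1) * (-2 * lam)⁻¹) = (1 - E) / lam by
        field_simp [h2l]; ring]
      field_simp
    rw [hE_def] at hid
    linarith [hfin, hid]
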